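/- Let A be the 3-by-3 reciprocal matrix with ones on the diagonal and above-diagonal entries a_12, a_13, a_23 > 0 (so its (2,1), (3,1), (3,2) entries are 1/a_12, 1/a_13, 1/a_23). Then a positive vector w = (w_1, w_2, w_3) is efficient for A if and only if either a_23·w_3 ≤ w_2 ≤ w_1/a_12 ≤ (a_13/a_12)·w_3, or a_23·w_3 ≥ w_2 ≥ w_1/a_12 ≥ (a_13/a_12)·w_3. -/

import Mathlib

def PosVec {ι : Type*} (w : ι → ℝ) : Prop := ∀ i, 0 < w i

def IsReciprocal {ι : Type*} (A : Matrix ι ι ℝ) : Prop :=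
  (∀ i j, 0 < A i j) ∧ ∀ i j, A j i = 1 / A i j

def IsEfficient {ι : Type*} (A : Matrix ι ι ℝ) (w : ι → ℝ) : Prop :=
  PosVec w ∧ ∀ v : ι → ℝ, PosVec v →
    (∀ i j, |A i j - v i / v j| ≤ |A i j - w i / w j|) →
    ∃ c : ℝ, 0 < c ∧ v = c • w

private lemma key (a x y : ℝ) (h : (a ≤ y ∧ y ≤ x) ∨ (x ≤ y ∧ y ≤ a)) :
    |a - y| ≤ |a - x| := by
  rcases h with ⟨h1, h2⟩ | ⟨h1, h2⟩
  · rw [abs_of_nonpos (by linarith), abs_of_nonpos (by linarith)]; linarith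
  · rw [abs_of_nonneg (by linarith), abs_of_nonneg (by linarith)]; linarith

private lemma key' (a x y : ℝ) (ha : 0 < a) (hx : 0 < x) (hy : 0 < y)
    (h : (a ≤ y ∧ y ≤ x) ∨ (x ≤ y ∧ y ≤ a)) :
    |a⁻¹ - y⁻¹| ≤ |a⁻¹ - x⁻¹| := by
  apply key
  rcases h with ⟨h1, h2⟩ | ⟨h1, h2⟩
  · exact Or.inr ⟨inv_anti₀ hy h2, inv_anti₀ ha h1⟩
  · exact Or.inl ⟨inv_anti₀ hy h2, inv_anti₀ hx h1⟩

private lemma divLeDivLeft {a b c : ℝ} (ha : 0 ≤ a) (hb : 0 < b) (h : b ≤ c) :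
    a / c ≤ a / b := by
  have hc : 0 < c := lt_of_lt_of_le hb h
  rw [div_le_div_iff₀ hc hb]
  nlinarith

private lemma ratio_le_of_abs_le {a x y : ℝ} (hax : a ≤ x) (h : |a - y| ≤ |a - x|) : y ≤ x := by
  have h1 : |a - x| = x - a := by rw [abs_sub_comm, abs_of_nonneg (by linarith)]
  have h2 : y - a ≤ |a - y| := by rw [abs_sub_comm]; exact le_abs_self _
  linarith

private lemma ratio_ge_of_abs_le {a x y : ℝ} (hax : x ≤ a) (h : |a - y| ≤ |a - x|) : x ≤ y := by
  have h1 : |a - x| = a - x := abs_of_nonneg (by linarith)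
  have h2 : a - y ≤ |a - y| := le_abs_self _
  linarith

private lemma exists_smul_of (w v : Fin 3 → ℝ) (hw : PosVec w) (hv : PosVec v)
    (p1 : v 0 * w 1 ≤ w 0 * v 1) (p2 : v 1 * w 2 ≤ w 1 * v 2)
    (p3 : w 0 * v 2 ≤ v 0 * w 2) :
    ∃ c : ℝ, 0 < c ∧ v = c • w := by
  have e1 : v 0 * w 1 = w 0 * v 1 := by
    refine le_antisymm p1 ?_
    have h := mul_le_mul p3 p2 (mul_pos (hv 1) (hw 2)).le (mul_pos (hv 0) (hw 2)).le
    nlinarith [mul_pos (hw 2) (hv 2)]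
  have e2 : v 1 * w 2 = w 1 * v 2 := by
    refine le_antisymm p2 ?_
    have h := mul_le_mul p3 p1 (mul_pos (hv 0) (hw 1)).le (mul_pos (hv 0) (hw 2)).le
    nlinarith [mul_pos (hv 0) (hw 0)]
  have k0' : v 0 * w 2 * w 1 = w 0 * v 2 * w 1 := by
    linear_combination w 2 * e1 + w 0 * e2
  have k0 : v 0 * w 2 = w 0 * v 2 := mul_right_cancel₀ (hw 1).ne' k0'
  refine ⟨v 2 / w 2, div_pos (hv 2) (hw 2), ?_⟩
  funext i
  fin_cases i
  · show v 0 = v 2 / w 2 * w 0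
    rw [div_mul_eq_mul_div, eq_div_iff (hw 2).ne']
    linear_combination k0
  · show v 1 = v 2 / w 2 * w 1
    rw [div_mul_eq_mul_div, eq_div_iff (hw 2).ne']
    linear_combination e2
  · show v 2 = v 2 / w 2 * w 2
    rw [div_mul_eq_mul_div, eq_div_iff (hw 2).ne']

private lemma notEff0 (a12 a13 a23 : ℝ) (h12 : 0 < a12) (h13 : 0 < a13) (h23 : 0 < a23)
    (w : Fin 3 → ℝ) (hw : PosVec w) (μ : ℝ) (hμ : 0 < μ) (hne : μ ≠ 1)
    (hb1 : (a12 ≤ μ * w 0 / w 1 ∧ μ * w 0 / w 1 ≤ w 0 / w 1) ∨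
      (w 0 / w 1 ≤ μ * w 0 / w 1 ∧ μ * w 0 / w 1 ≤ a12))
    (hb2 : (a13 ≤ μ * w 0 / w 2 ∧ μ * w 0 / w 2 ≤ w 0 / w 2) ∨
      (w 0 / w 2 ≤ μ * w 0 / w 2 ∧ μ * w 0 / w 2 ≤ a13)) :
    ¬ IsEfficient !![1, a12, a13; 1 / a12, 1, a23; 1 / a13, 1 / a23, 1] w := by
  intro heff
  have hv : PosVec ![μ * w 0, w 1, w 2] := by
    intro i; fin_cases i <;> simp
    · exact mul_pos hμ (hw 0)
    · exact hw 1
    · exact hw 2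
  have hcomp : ∀ i j,
      |(!![1, a12, a13; 1 / a12, 1, a23; 1 / a13, 1 / a23, 1] : Matrix (Fin 3) (Fin 3) ℝ) i j
        - ![μ * w 0, w 1, w 2] i / ![μ * w 0, w 1, w 2] j|
      ≤ |(!![1, a12, a13; 1 / a12, 1, a23; 1 / a13, 1 / a23, 1] : Matrix (Fin 3) (Fin 3) ℝ) i j
        - w i / w j| := by
    intro i j
    fin_cases i <;> fin_cases j <;>
      simp [(hw 0).ne', (hw 1).ne', (hw 2).ne', hμ.ne', (mul_pos hμ (hw 0)).ne']
    · exact key a12 (w 0 / w 1) (μ * w 0 / w 1) hb1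
    · exact key a13 (w 0 / w 2) (μ * w 0 / w 2) hb2
    · have h := key' a12 (w 0 / w 1) (μ * w 0 / w 1) h12 (div_pos (hw 0) (hw 1))
        (div_pos (mul_pos hμ (hw 0)) (hw 1)) hb1
      rwa [inv_div, inv_div] at h
    · have h := key' a13 (w 0 / w 2) (μ * w 0 / w 2) h13 (div_pos (hw 0) (hw 2))
        (div_pos (mul_pos hμ (hw 0)) (hw 2)) hb2
      rwa [inv_div, inv_div] at h
  obtain ⟨c, hc, hvc⟩ := heff.2 _ hv hcomp
  have h0 := congrFun hvc 0
  have h1 := congrFun hvc 1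
  simp only [Matrix.cons_val_zero, Matrix.cons_val_one, Matrix.head_cons,
    Pi.smul_apply, smul_eq_mul] at h0 h1
  have hc1 : c = 1 := by
    have h : (c - 1) * w 1 = 0 := by linear_combination -h1
    rcases mul_eq_zero.mp h with h | h
    · linarith
    · exact absurd h (hw 1).ne'
  apply hne
  rw [hc1] at h0
  have h : (μ - 1) * w 0 = 0 := by linear_combination h0
  rcases mul_eq_zero.mp h with h | h
  · linarith
  · exact absurd h (hw 0).ne'

private lemma notEff1 (a12 a13 a23 : ℝ) (h12 : 0 < a12) (h13 : 0 < a13) (h23 : 0 < a23)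
    (w : Fin 3 → ℝ) (hw : PosVec w) (μ : ℝ) (hμ : 0 < μ) (hne : μ ≠ 1)
    (hb1 : (a12 ≤ w 0 / (μ * w 1) ∧ w 0 / (μ * w 1) ≤ w 0 / w 1) ∨
      (w 0 / w 1 ≤ w 0 / (μ * w 1) ∧ w 0 / (μ * w 1) ≤ a12))
    (hb2 : (a23 ≤ μ * w 1 / w 2 ∧ μ * w 1 / w 2 ≤ w 1 / w 2) ∨
      (w 1 / w 2 ≤ μ * w 1 / w 2 ∧ μ * w 1 / w 2 ≤ a23)) :
    ¬ IsEfficient !![1, a12, a13; 1 / a12, 1, a23; 1 / a13, 1 / a23, 1] w := by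
  intro heff
  have hv : PosVec ![w 0, μ * w 1, w 2] := by
    intro i; fin_cases i <;> simp
    · exact hw 0
    · exact mul_pos hμ (hw 1)
    · exact hw 2
  have hcomp : ∀ i j,
      |(!![1, a12, a13; 1 / a12, 1, a23; 1 / a13, 1 / a23, 1] : Matrix (Fin 3) (Fin 3) ℝ) i j
        - ![w 0, μ * w 1, w 2] i / ![w 0, μ * w 1, w 2] j|
      ≤ |(!![1, a12, a13; 1 / a12, 1, a23; 1 / a13, 1 / a23, 1] : Matrix (Fin 3) (Fin 3) ℝ) i j
        - w i / w j| := by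
    intro i j
    fin_cases i <;> fin_cases j <;>
      simp [(hw 0).ne', (hw 1).ne', (hw 2).ne', hμ.ne', (mul_pos hμ (hw 1)).ne']
    · exact key a12 (w 0 / w 1) (w 0 / (μ * w 1)) hb1
    · have h := key' a12 (w 0 / w 1) (w 0 / (μ * w 1)) h12 (div_pos (hw 0) (hw 1))
        (div_pos (hw 0) (mul_pos hμ (hw 1))) hb1
      rwa [inv_div, inv_div] at h
    · exact key a23 (w 1 / w 2) (μ * w 1 / w 2) hb2
    · have h := key' a23 (w 1 / w 2) (μ * w 1 / w 2) h23 (div_pos (hw 1) (hw 2))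
        (div_pos (mul_pos hμ (hw 1)) (hw 2)) hb2
      rwa [inv_div, inv_div] at h
  obtain ⟨c, hc, hvc⟩ := heff.2 _ hv hcomp
  have h0 := congrFun hvc 0
  have h1 := congrFun hvc 1
  simp only [Matrix.cons_val_zero, Matrix.cons_val_one, Matrix.head_cons,
    Pi.smul_apply, smul_eq_mul] at h0 h1
  have hc1 : c = 1 := by
    have h : (c - 1) * w 0 = 0 := by linear_combination -h0
    rcases mul_eq_zero.mp h with h | h
    · linarith
    · exact absurd h (hw 0).ne'
  apply hne
  rw [hc1] at h1
  have h : (μ - 1) * w 1 = 0 := by linear_combination h1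
  rcases mul_eq_zero.mp h with h | h
  · linarith
  · exact absurd h (hw 1).ne'

private lemma notEff2 (a12 a13 a23 : ℝ) (h12 : 0 < a12) (h13 : 0 < a13) (h23 : 0 < a23)
    (w : Fin 3 → ℝ) (hw : PosVec w) (μ : ℝ) (hμ : 0 < μ) (hne : μ ≠ 1)
    (hb1 : (a13 ≤ w 0 / (μ * w 2) ∧ w 0 / (μ * w 2) ≤ w 0 / w 2) ∨
      (w 0 / w 2 ≤ w 0 / (μ * w 2) ∧ w 0 / (μ * w 2) ≤ a13))
    (hb2 : (a23 ≤ w 1 / (μ * w 2) ∧ w 1 / (μ * w 2) ≤ w 1 / w 2) ∨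
      (w 1 / w 2 ≤ w 1 / (μ * w 2) ∧ w 1 / (μ * w 2) ≤ a23)) :
    ¬ IsEfficient !![1, a12, a13; 1 / a12, 1, a23; 1 / a13, 1 / a23, 1] w := by
  intro heff
  have hv : PosVec ![w 0, w 1, μ * w 2] := by
    intro i; fin_cases i <;> simp
    · exact hw 0
    · exact hw 1
    · exact mul_pos hμ (hw 2)
  have hcomp : ∀ i j,
      |(!![1, a12, a13; 1 / a12, 1, a23; 1 / a13, 1 / a23, 1] : Matrix (Fin 3) (Fin 3) ℝ) i j
        - ![w 0, w 1, μ * w 2] i / ![w 0, w 1, μ * w 2] j|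
      ≤ |(!![1, a12, a13; 1 / a12, 1, a23; 1 / a13, 1 / a23, 1] : Matrix (Fin 3) (Fin 3) ℝ) i j
        - w i / w j| := by
    intro i j
    fin_cases i <;> fin_cases j <;>
      simp [(hw 0).ne', (hw 1).ne', (hw 2).ne', hμ.ne', (mul_pos hμ (hw 2)).ne']
    · exact key a13 (w 0 / w 2) (w 0 / (μ * w 2)) hb1
    · exact key a23 (w 1 / w 2) (w 1 / (μ * w 2)) hb2
    · have h := key' a13 (w 0 / w 2) (w 0 / (μ * w 2)) h13 (div_pos (hw 0) (hw 2))
        (div_pos (hw 0) (mul_pos hμ (hw 2))) hb1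
      rwa [inv_div, inv_div] at h
    · have h := key' a23 (w 1 / w 2) (w 1 / (μ * w 2)) h23 (div_pos (hw 1) (hw 2))
        (div_pos (hw 1) (mul_pos hμ (hw 2))) hb2
      rwa [inv_div, inv_div] at h
  obtain ⟨c, hc, hvc⟩ := heff.2 _ hv hcomp
  have h0 := congrFun hvc 0
  have h2 := congrFun hvc 2
  simp only [Matrix.cons_val_zero, Matrix.cons_val_one, Matrix.head_cons,
    Matrix.cons_val_two, Matrix.tail_cons, Pi.smul_apply, smul_eq_mul] at h0 h2
  have hc1 : c = 1 := by
    have h : (c - 1) * w 0 = 0 := by linear_combination -h0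
    rcases mul_eq_zero.mp h with h | h
    · linarith
    · exact absurd h (hw 0).ne'
  apply hne
  rw [hc1] at h2
  have h : (μ - 1) * w 2 = 0 := by linear_combination h2
  rcases mul_eq_zero.mp h with h | h
  · linarith
  · exact absurd h (hw 2).ne'

/-- description of the efficient vectors for a 3-by-3 reciprocal matrix. -/
theorem efficient_iff_three_by_three (a12 a13 a23 : ℝ)
    (h12 : 0 < a12) (h13 : 0 < a13) (h23 : 0 < a23)
    (A : Matrix (Fin 3) (Fin 3) ℝ)
    (hA : A = !![1, a12, a13; 1 / a12, 1, a23; 1 / a13, 1 / a23, 1])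
    (w : Fin 3 → ℝ) (hw : PosVec w) :
    IsEfficient A w ↔
      ((a23 * w 2 ≤ w 1 ∧ w 1 ≤ w 0 / a12 ∧ w 0 / a12 ≤ (a13 / a12) * w 2) ∨
        (a23 * w 2 ≥ w 1 ∧ w 1 ≥ w 0 / a12 ∧ w 0 / a12 ≥ (a13 / a12) * w 2)) := by
  subst hA
  have hw0 := hw 0
  have hw1 := hw 1
  have hw2 := hw 2
  constructor
  · -- efficiency ⇒ condition
    intro heff
    by_contra hnot
    rw [not_or] at hnot
    obtain ⟨hn1, hn2⟩ := hnot
    rw [not_and_or, not_and_or, not_le, not_le, not_le] at hn1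
    rw [ge_iff_le, ge_iff_le, ge_iff_le, not_and_or, not_and_or, not_le, not_le, not_le] at hn2
    have S1 : w 1 < a23 * w 2 ∨ w 0 < a12 * w 1 ∨ a13 * w 2 < w 0 := by
      rcases hn1 with h | h | h
      · exact Or.inl h
      · right; left; rw [div_lt_iff₀ h12] at h; linarith
      · right; right
        have h' := mul_lt_mul_of_pos_right h h12
        have e1 : a13 / a12 * w 2 * a12 = a13 * w 2 := by field_simp
        have e2 : w 0 / a12 * a12 = w 0 := div_mul_cancel₀ _ h12.ne'
        linarith
    have S2 : a23 * w 2 < w 1 ∨ a12 * w 1 < w 0 ∨ w 0 < a13 * w 2 := by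
      rcases hn2 with h | h | h
      · exact Or.inl h
      · right; left; rw [lt_div_iff₀ h12] at h; linarith
      · right; right
        have h' := mul_lt_mul_of_pos_right h h12
        have e1 : a13 / a12 * w 2 * a12 = a13 * w 2 := by field_simp
        have e2 : w 0 / a12 * a12 = w 0 := div_mul_cancel₀ _ h12.ne'
        linarith
    rcases S1 with d2n | d1n | d3n <;> rcases S2 with d2p | d1p | d3p
    · linarith
    · -- d2<0, d1>0 : scale coord 1 up (Case A)
      set μ := min (w 0 / (a12 * w 1)) (a23 * w 2 / w 1) with hμdef
      have hgt : 1 < μ := lt_min ((one_lt_div (mul_pos h12 hw1)).mpr d1p)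
        ((one_lt_div hw1).mpr d2n)
      have hμ0 : 0 < μ := lt_trans one_pos hgt
      have hA : μ * (a12 * w 1) ≤ w 0 := (le_div_iff₀ (mul_pos h12 hw1)).mp (min_le_left _ _)
      have hB : μ * w 1 ≤ a23 * w 2 := (le_div_iff₀ hw1).mp (min_le_right _ _)
      refine notEff1 a12 a13 a23 h12 h13 h23 w hw μ hμ0 (ne_of_gt hgt) ?_ ?_ heff
      · left
        constructor
        · rw [le_div_iff₀ (mul_pos hμ0 hw1)]; nlinarith
        · exact divLeDivLeft hw0.le hw1 (by nlinarith [hw0, hw1, hw2])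
      · right
        constructor
        · rw [div_le_div_iff₀ hw2 hw2]; nlinarith [mul_pos hw1 hw2, mul_pos hw0 hw2]
        · rw [div_le_iff₀ hw2]; exact hB
    · -- d2<0, d3>0 : scale coord 2 down (Case F)
      set μ := max (w 1 / (a23 * w 2)) (w 0 / (a13 * w 2)) with hμdef
      have hlt : μ < 1 := max_lt ((div_lt_one (mul_pos h23 hw2)).mpr d2n)
        ((div_lt_one (mul_pos h13 hw2)).mpr d3p)
      have hμ0 : 0 < μ :=
        lt_of_lt_of_le (div_pos hw1 (mul_pos h23 hw2)) (le_max_left _ _)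
      have hB' : w 1 ≤ μ * (a23 * w 2) := (div_le_iff₀ (mul_pos h23 hw2)).mp (le_max_left _ _)
      have hA' : w 0 ≤ μ * (a13 * w 2) := (div_le_iff₀ (mul_pos h13 hw2)).mp (le_max_right _ _)
      refine notEff2 a12 a13 a23 h12 h13 h23 w hw μ hμ0 (ne_of_lt hlt) ?_ ?_ heff
      · right
        constructor
        · exact divLeDivLeft hw0.le (mul_pos hμ0 hw2) (by nlinarith [hw0, hw1, hw2])
        · rw [div_le_iff₀ (mul_pos hμ0 hw2)]; nlinarith
      · right
        constructor
        · exact divLeDivLeft hw1.le (mul_pos hμ0 hw2) (by nlinarith [hw0, hw1, hw2])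
        · rw [div_le_iff₀ (mul_pos hμ0 hw2)]; nlinarith
    · -- d1<0, d2>0 : scale coord 1 down (Case B)
      set μ := max (w 0 / (a12 * w 1)) (a23 * w 2 / w 1) with hμdef
      have hlt : μ < 1 := max_lt ((div_lt_one (mul_pos h12 hw1)).mpr d1n)
        ((div_lt_one hw1).mpr d2p)
      have hμ0 : 0 < μ :=
        lt_of_lt_of_le (div_pos hw0 (mul_pos h12 hw1)) (le_max_left _ _)
      have hA : w 0 ≤ μ * (a12 * w 1) := (div_le_iff₀ (mul_pos h12 hw1)).mp (le_max_left _ _)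
      have hB : a23 * w 2 ≤ μ * w 1 := (div_le_iff₀ hw1).mp (le_max_right _ _)
      refine notEff1 a12 a13 a23 h12 h13 h23 w hw μ hμ0 (ne_of_lt hlt) ?_ ?_ heff
      · right
        constructor
        · exact divLeDivLeft hw0.le (mul_pos hμ0 hw1) (by nlinarith [hw0, hw1, hw2])
        · rw [div_le_iff₀ (mul_pos hμ0 hw1)]; nlinarith
      · left
        constructor
        · rw [le_div_iff₀ hw2]; nlinarith
        · rw [div_le_div_iff₀ hw2 hw2]; nlinarith [mul_pos hw1 hw2, mul_pos hw0 hw2]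
    · linarith
    · -- d1<0, d3>0 : scale coord 0 up (Case D)
      set μ := min (a12 * w 1 / w 0) (a13 * w 2 / w 0) with hμdef
      have hgt : 1 < μ := lt_min ((one_lt_div hw0).mpr d1n) ((one_lt_div hw0).mpr d3p)
      have hμ0 : 0 < μ := lt_trans one_pos hgt
      have hA : μ * w 0 ≤ a12 * w 1 := (le_div_iff₀ hw0).mp (min_le_left _ _)
      have hB : μ * w 0 ≤ a13 * w 2 := (le_div_iff₀ hw0).mp (min_le_right _ _)
      refine notEff0 a12 a13 a23 h12 h13 h23 w hw μ hμ0 (ne_of_gt hgt) ?_ ?_ heff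
      · right
        constructor
        · rw [div_le_div_iff₀ hw1 hw1]; nlinarith [mul_pos hw0 hw1]
        · rw [div_le_iff₀ hw1]; exact hA
      · right
        constructor
        · rw [div_le_div_iff₀ hw2 hw2]; nlinarith [mul_pos hw1 hw2, mul_pos hw0 hw2]
        · rw [div_le_iff₀ hw2]; exact hB
    · -- d3<0, d2>0 : scale coord 2 up (Case E)
      set μ := min (w 1 / (a23 * w 2)) (w 0 / (a13 * w 2)) with hμdef
      have hgt : 1 < μ := lt_min ((one_lt_div (mul_pos h23 hw2)).mpr d2p)
        ((one_lt_div (mul_pos h13 hw2)).mpr d3n)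
      have hμ0 : 0 < μ := lt_trans one_pos hgt
      have hB' : μ * (a23 * w 2) ≤ w 1 := (le_div_iff₀ (mul_pos h23 hw2)).mp (min_le_left _ _)
      have hA' : μ * (a13 * w 2) ≤ w 0 := (le_div_iff₀ (mul_pos h13 hw2)).mp (min_le_right _ _)
      refine notEff2 a12 a13 a23 h12 h13 h23 w hw μ hμ0 (ne_of_gt hgt) ?_ ?_ heff
      · left
        constructor
        · rw [le_div_iff₀ (mul_pos hμ0 hw2)]; nlinarith
        · exact divLeDivLeft hw0.le hw2 (by nlinarith [hw0, hw1, hw2])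
      · left
        constructor
        · rw [le_div_iff₀ (mul_pos hμ0 hw2)]; nlinarith
        · exact divLeDivLeft hw1.le hw2 (by nlinarith [hw0, hw1, hw2])
    · -- d3<0, d1>0 : scale coord 0 down (Case C)
      set μ := max (a12 * w 1 / w 0) (a13 * w 2 / w 0) with hμdef
      have hlt : μ < 1 := max_lt ((div_lt_one hw0).mpr d1p) ((div_lt_one hw0).mpr d3n)
      have hμ0 : 0 < μ :=
        lt_of_lt_of_le (div_pos (mul_pos h12 hw1) hw0) (le_max_left _ _)
      have hA : a12 * w 1 ≤ μ * w 0 := (div_le_iff₀ hw0).mp (le_max_left _ _)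
      have hB : a13 * w 2 ≤ μ * w 0 := (div_le_iff₀ hw0).mp (le_max_right _ _)
      refine notEff0 a12 a13 a23 h12 h13 h23 w hw μ hμ0 (ne_of_lt hlt) ?_ ?_ heff
      · left
        constructor
        · rw [le_div_iff₀ hw1]; exact hA
        · rw [div_le_div_iff₀ hw1 hw1]; nlinarith [mul_pos hw0 hw1]
      · left
        constructor
        · rw [le_div_iff₀ hw2]; exact hB
        · rw [div_le_div_iff₀ hw2 hw2]; nlinarith [mul_pos hw1 hw2, mul_pos hw0 hw2]
    · linarith
  · -- condition ⇒ efficiency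
    intro hcond
    refine ⟨hw, ?_⟩
    intro v hv hvw
    have e01 := hvw 0 1
    have e12 := hvw 1 2
    have e02 := hvw 0 2
    simp only [Matrix.of_apply, Matrix.cons_val', Matrix.cons_val_zero, Matrix.cons_val_one, Matrix.head_cons,
      Matrix.empty_val', Matrix.cons_val_fin_one, Matrix.head_fin_const, Matrix.cons_val_two,
      Matrix.tail_cons] at e01 e12 e02
    have hv0 := hv 0
    have hv1 := hv 1
    have hv2 := hv 2
    rcases hcond with ⟨c1, c2, c3⟩ | ⟨c1, c2, c3⟩
    · have hr1 : a12 ≤ w 0 / w 1 := by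
        rw [le_div_iff₀ hw1]; rw [le_div_iff₀ h12] at c2; linarith
      have hr2 : a23 ≤ w 1 / w 2 := by
        rw [le_div_iff₀ hw2]; linarith
      have hr3 : w 0 / w 2 ≤ a13 := by
        rw [div_le_iff₀ hw2]
        have h' := mul_le_mul_of_nonneg_right c3 h12.le
        have eq1 : a13 / a12 * w 2 * a12 = a13 * w 2 := by field_simp
        have eq2 : w 0 / a12 * a12 = w 0 := div_mul_cancel₀ _ h12.ne'
        linarith
      have q1 : v 0 / v 1 ≤ w 0 / w 1 := ratio_le_of_abs_le hr1 e01
      have q2 : v 1 / v 2 ≤ w 1 / w 2 := ratio_le_of_abs_le hr2 e12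
      have q3 : w 0 / w 2 ≤ v 0 / v 2 := ratio_ge_of_abs_le hr3 e02
      exact exists_smul_of w v hw hv ((div_le_div_iff₀ hv1 hw1).mp q1)
        ((div_le_div_iff₀ hv2 hw2).mp q2) ((div_le_div_iff₀ hw2 hv2).mp q3)
    · rw [ge_iff_le] at c1 c2 c3
      have hr1 : w 0 / w 1 ≤ a12 := by
        rw [div_le_iff₀ hw1]; rw [div_le_iff₀ h12] at c2; linarith
      have hr2 : w 1 / w 2 ≤ a23 := by
        rw [div_le_iff₀ hw2]; linarith
      have hr3 : a13 ≤ w 0 / w 2 := by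
        rw [le_div_iff₀ hw2]
        have h' := mul_le_mul_of_nonneg_right c3 h12.le
        have eq1 : a13 / a12 * w 2 * a12 = a13 * w 2 := by field_simp
        have eq2 : w 0 / a12 * a12 = w 0 := div_mul_cancel₀ _ h12.ne'
        linarith
      have q1 : w 0 / w 1 ≤ v 0 / v 1 := ratio_ge_of_abs_le hr1 e01
      have q2 : w 1 / w 2 ≤ v 1 / v 2 := ratio_ge_of_abs_le hr2 e12
      have q3 : v 0 / v 2 ≤ w 0 / w 2 := ratio_le_of_abs_le hr3 e02
      obtain ⟨c, hc, hwv⟩ := exists_smul_of v w hv hw ((div_le_div_iff₀ hw1 hv1).mp q1)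
        ((div_le_div_iff₀ hw2 hv2).mp q2) ((div_le_div_iff₀ hv2 hw2).mp q3)
      refine ⟨c⁻¹, inv_pos.mpr hc, ?_⟩
      rw [hwv, smul_smul, inv_mul_cancel₀ hc.ne', one_smul]
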